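/- Let ρ: ℤ → [-1,1] satisfy Σ_{k∈ℤ}|ρ(k)| < ∞, fix an integer M ≥ 2 and a nonzero vector v ∈ ℝ^M with components in {-1,0,1}. Then there is a constant C such that for all n ≥ 1, Σ_{|k_j| ≤ n, 1 ≤ j ≤ M} |ρ(k·v)| Π_{j=1}^{M} |ρ(k_j)| ≤ C ( Σ_{|k| ≤ n} |ρ(k)| )^{M-1}. -/
import Mathlib


/-- For `|ρ| ≤ 1` summable and a nonzero `v` with entries in `{-1,0,1}`,
`∑_{|k_j|≤n} |ρ(k·v)| ∏_j |ρ(k_j)| ≤ C (∑_{|k|≤n} |ρ(k)|)^{M-1}`. -/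
theorem brascamp_lieb_sum_bound' (M : ℕ) (hM : 2 ≤ M) (ρ : ℤ → ℝ)
    (hρ1 : ∀ k, |ρ k| ≤ 1) (hρ2 : Summable fun k => |ρ k|)
    (v : Fin M → ℤ) (hv0 : v ≠ 0) (hv : ∀ j, v j = -1 ∨ v j = 0 ∨ v j = 1) :
    ∃ C : ℝ, ∀ n : ℕ, 1 ≤ n →
      ∑ k ∈ Fintype.piFinset (fun _ : Fin M => Finset.Icc (-(n : ℤ)) (n : ℤ)),
          (|ρ (∑ j, k j * v j)| * ∏ j, |ρ (k j)|)
        ≤ C * (∑ k ∈ Finset.Icc (-(n : ℤ)) (n : ℤ), |ρ k|) ^ (M - 1) := by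
  obtain ⟨j0, hj0⟩ : ∃ j, v j ≠ 0 := by
    by_contra h
    push_neg at h
    exact hv0 (funext h)
  refine ⟨∑' k, |ρ k|, fun n hn => ?_⟩
  set S : ℝ := ∑ k ∈ Finset.Icc (-(n : ℤ)) (n : ℤ), |ρ k| with hS
  have hSnn : 0 ≤ S := Finset.sum_nonneg fun _ _ => abs_nonneg _
  set s := Fintype.piFinset (fun _ : Fin M => Finset.Icc (-(n : ℤ)) (n : ℤ)) with hs
  set t := Fintype.piFinset (fun _ : {j : Fin M // j ≠ j0} =>
      Finset.Icc (-(n : ℤ)) (n : ℤ)) with ht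
  set I := Finset.Icc (-(M * n : ℤ)) (M * n : ℤ) with hI
  set g : ℤ × ({j : Fin M // j ≠ j0} → ℤ) → ℝ :=
    fun p => |ρ p.1| * ∏ j, |ρ (p.2 j)| with hg
  set Φ : (Fin M → ℤ) → ℤ × ({j : Fin M // j ≠ j0} → ℤ) :=
    fun k => (∑ j, k j * v j, fun j => k j.1) with hΦ
  have hgnn : ∀ p, 0 ≤ g p := fun p =>
    mul_nonneg (abs_nonneg _) (Finset.prod_nonneg fun _ _ => abs_nonneg _)
  -- pointwise bound
  have step1 : ∀ k ∈ s, |ρ (∑ j, k j * v j)| * ∏ j, |ρ (k j)| ≤ g (Φ k) := by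
    intro k _
    have : ∏ j, |ρ (k j)| ≤ ∏ j : {j : Fin M // j ≠ j0}, |ρ (k j.1)| := by
      rw [Fintype.prod_eq_mul_prod_compl j0, ← Finset.prod_subtype ({j0}ᶜ : Finset (Fin M))
        (fun x => by simp) (fun j => |ρ (k j)|)]
      exact mul_le_of_le_one_left (Finset.prod_nonneg fun _ _ => abs_nonneg _) (hρ1 _)
    exact mul_le_mul_of_nonneg_left this (abs_nonneg _)
  -- injectivity of Φ on s
  have hinj : Set.InjOn Φ s := by
    intro k _ k' _ h
    have h1 : (∑ j, k j * v j) = ∑ j, k' j * v j := congrArg Prod.fst h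
    have h2 : ∀ j : Fin M, j ≠ j0 → k j = k' j := by
      intro j hj
      exact congrFun (congrArg Prod.snd h) ⟨j, hj⟩
    funext j
    by_cases hj : j = j0
    · subst hj
      rw [Fintype.sum_eq_add_sum_compl j, Fintype.sum_eq_add_sum_compl j] at h1
      have hrest : ∑ x ∈ ({j}ᶜ : Finset (Fin M)), k x * v x
          = ∑ x ∈ ({j}ᶜ : Finset (Fin M)), k' x * v x := by
        refine Finset.sum_congr rfl fun x hx => ?_
        rw [h2 x (by simpa using hx)]
      have : k j * v j = k' j * v j := by linarith [h1, hrest]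
      exact mul_right_cancel₀ hj0 this
    · exact h2 j hj
  -- Φ maps s into I ×ˢ t
  have hmaps : ∀ k ∈ s, Φ k ∈ I ×ˢ t := by
    intro k hk
    simp only [hs, Fintype.mem_piFinset, Finset.mem_Icc] at hk
    have habs : ∀ j, |k j| ≤ (n : ℤ) := fun j => abs_le.2 (hk j)
    rw [Finset.mem_product]
    constructor
    · rw [hI, Finset.mem_Icc, ← abs_le]
      calc |∑ j, k j * v j| ≤ ∑ j, |k j * v j| := Finset.abs_sum_le_sum_abs _ _
        _ ≤ ∑ _j : Fin M, (n : ℤ) := by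
            refine Finset.sum_le_sum fun j _ => ?_
            rw [abs_mul]
            have hvj : |v j| ≤ 1 := by rcases hv j with h | h | h <;> simp [h]
            calc |k j| * |v j| ≤ (n : ℤ) * 1 :=
              mul_le_mul (habs j) hvj (abs_nonneg _) (by positivity)
              _ = (n : ℤ) := mul_one _
        _ = (M : ℤ) * n := by simp [mul_comm]
    · rw [ht, Fintype.mem_piFinset]
      intro j
      rw [Finset.mem_Icc]
      exact hk j.1
  -- main chain
  calc ∑ k ∈ s, (|ρ (∑ j, k j * v j)| * ∏ j, |ρ (k j)|)
      ≤ ∑ k ∈ s, g (Φ k) := Finset.sum_le_sum step1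
    _ = ∑ p ∈ s.image Φ, g p := (Finset.sum_image (fun a ha b hb => hinj ha hb)).symm
    _ ≤ ∑ p ∈ I ×ˢ t, g p := by
        refine Finset.sum_le_sum_of_subset_of_nonneg ?_ (fun p _ _ => hgnn p)
        intro p hp
        obtain ⟨k, hk, rfl⟩ := Finset.mem_image.1 hp
        exact hmaps k hk
    _ = (∑ m ∈ I, |ρ m|) * ∑ r ∈ t, ∏ j, |ρ (r j)| := by
        rw [Finset.sum_product, Finset.sum_mul]
        exact Finset.sum_congr rfl fun m _ => by rw [Finset.mul_sum]
    _ = (∑ m ∈ I, |ρ m|) * S ^ (M - 1) := by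
        have key := Finset.sum_prod_piFinset (Finset.Icc (-(n : ℤ)) (n : ℤ))
          (fun (_ : {j : Fin M // j ≠ j0}) (x : ℤ) => |ρ x|)
        rw [ht, key, Finset.prod_const]
        congr 2
        simp only [Finset.card_univ]
        have : Fintype.card {j : Fin M // j ≠ j0} = M - 1 := by
          simp [Fintype.card_subtype_compl, Fintype.card_subtype_eq]
        rw [this]
    _ ≤ (∑' k, |ρ k|) * S ^ (M - 1) := by
        refine mul_le_mul_of_nonneg_right ?_ (pow_nonneg hSnn _)
        exact Summable.sum_le_tsum I (fun _ _ => abs_nonneg _) hρ2
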